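/- Let 0 ≤ j_1 ≤ j_2 ≤ … ≤ j_n ≤ m and let (t_0=0, t_1, …, t_m) be a payment profile such that t_{j_1} − c_{1,j_1} ≥ 0 and, for every agent i ∈ {2,…,n}, t_{j_i} − c_{i,j_i} ≥ t_{j_{i−1}} − c_{i,j_{i−1}}. Then for every agent i ∈ {1,…,n}, t_{j_i} ≥ Σ_{i'=1}^{i−1} ( c_{i',j_{i'}} − c_{i'+1,j_{i'}} ) + c_{i,j_i}. -/

import Mathlib

/-- Under the incentive inequalities along the chain `j_1 ≤ … ≤ j_n`, the
payment for action `j_i` is at least `Σ_{i'=1}^{i-1}(c_{i',j_{i'}} - c_{i'+1,j_{i'}}) + c_{i,j_i}`. -/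
theorem stmt_2 (n m : ℕ) (hn : 1 ≤ n) (ρ : ℕ → ℝ) (c : ℕ → ℕ → ℝ) (t : ℕ → ℝ)
    (j : ℕ → ℕ)
    (hρ0 : ρ 0 = 0) (hρ : ∀ k ≤ m, 0 ≤ ρ k)
    (hc0 : ∀ i, 1 ≤ i → i ≤ n → c i 0 = 0)
    (hcnn : ∀ i, 1 ≤ i → i ≤ n → ∀ k ≤ m, 0 ≤ c i k)
    (ht0 : t 0 = 0)
    (hjm : ∀ i, 1 ≤ i → i ≤ n → j i ≤ m)
    (hjmono : ∀ i, 1 ≤ i → i < n → j i ≤ j (i + 1))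
    (h1 : 0 ≤ t (j 1) - c 1 (j 1))
    (hic : ∀ i, 2 ≤ i → i ≤ n → t (j (i - 1)) - c i (j (i - 1)) ≤ t (j i) - c i (j i)) :
    ∀ i, 1 ≤ i → i ≤ n →
      ∑ i' ∈ Finset.Icc 1 (i - 1), (c i' (j i') - c (i' + 1) (j i')) + c i (j i) ≤ t (j i) := by
  intro i
  induction i with
  | zero => intro h; omega
  | succ k ih =>
    intro _ hkn
    rcases Nat.eq_zero_or_pos k with rfl | hk
    · simpa using h1
    · have ihk := ih hk (by omega)
      have hstep := hic (k + 1) (by omega) hkn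
      simp only [Nat.add_sub_cancel] at hstep
      obtain ⟨l, rfl⟩ : ∃ l, k = l + 1 := ⟨k - 1, by omega⟩
      rw [show l + 1 + 1 - 1 = l + 1 from rfl,
        Finset.sum_Icc_succ_top (by omega : 1 ≤ l + 1)]
      simp only [Nat.add_sub_cancel] at ihk
      linarith
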